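/- Let I ⊆ S = K[x_1,…,x_n] be a monomial ideal generated in a single degree that has linear quotients, and fix an admissible order u_1,…,u_m of its minimal monomial generators. Then the first homological shift ideal HS_1(I), namely the monomial ideal generated by all products u_i·x_j with 1 ≤ i ≤ m and j ∈ set(u_i), has linear quotients. -/

import Mathlib

open MvPolynomial

/-- An ideal of `K[x_1,…,x_n]` is *generated by variables* if it is the span of the
image of a subset of the variables. -/
def genByVars {K : Type*} [Field K] {n : ℕ} (I : Ideal (MvPolynomial (Fin n) K)) : Prop :=
  ∃ T : Set (Fin n), I = Ideal.span (MvPolynomial.X '' T)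
/-- A polynomial is a monomial (with coefficient `1`). -/
def IsMonomialElt {K : Type*} [Field K] {n : ℕ} (p : MvPolynomial (Fin n) K) : Prop :=
  ∃ a : Fin n →₀ ℕ, p = MvPolynomial.monomial a 1
/-- A monomial ideal has *linear quotients* if its minimal monomial generators admit an
ordering `u 0, u 1, …` such that each colon ideal `(u_0,…,u_{i-1}) : u_i` is generated by a
subset of the variables.  (The conditions that the `u i` are monomials, pairwise
non-dividing, and generate `I` say exactly that they are the minimal monomial generators
of `I`.) -/
def HasLinearQuotients {K : Type*} [Field K] {n : ℕ}
    (I : Ideal (MvPolynomial (Fin n) K)) : Prop :=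
  ∃ (m : ℕ) (u : Fin m → MvPolynomial (Fin n) K),
    (∀ i, IsMonomialElt (u i)) ∧
    (∀ i j, i ≠ j → ¬ u i ∣ u j) ∧
    Ideal.span (Set.range u) = I ∧
    ∀ i : Fin m,
      genByVars ((Ideal.span (u '' {j | j < i})).colon (Ideal.span {u i}))
namespace HSaux

variable {n m : ℕ}

/-- total degree of an exponent vector -/
def deg (f : Fin n →₀ ℕ) : ℕ := f.sum fun _ e => e

noncomputable abbrev e' (j : Fin n) : Fin n →₀ ℕ := Finsupp.single j 1

lemma deg_add (f g : Fin n →₀ ℕ) : deg (f + g) = deg f + deg g :=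
  Finsupp.sum_add_index' (fun _ => rfl) (fun _ _ _ => rfl)

lemma deg_single (j : Fin n) (k : ℕ) : deg (Finsupp.single j k) = k :=
  Finsupp.sum_single_index rfl

lemma eq_zero_of_deg_eq_zero {f : Fin n →₀ ℕ} (h : deg f = 0) : f = 0 := by
  rw [deg, Finsupp.sum, Finset.sum_eq_zero_iff] at h
  ext x
  by_cases hx : x ∈ f.support
  · exact h x hx
  · simpa using Finsupp.notMem_support_iff.mp hx

lemma eq_of_le_of_deg_eq {f g : Fin n →₀ ℕ} (h : f ≤ g) (hd : deg f = deg g) : f = g := by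
  have h1 : g - f + f = g := tsub_add_cancel_of_le h
  have h2 : deg (g - f) + deg f = deg g := by rw [← deg_add, h1]
  have h3 : deg (g - f) = 0 := by omega
  have h4 : g - f = 0 := eq_zero_of_deg_eq_zero h3
  rw [h4, zero_add] at h1
  exact h1

lemma exists_single_of_le_of_deg {f g : Fin n →₀ ℕ} (h : f ≤ g) (hd : deg g = deg f + 1) :
    ∃ q, g = f + e' q := by
  have h1 : g - f + f = g := tsub_add_cancel_of_le h
  have h2 : deg (g - f) + deg f = deg g := by rw [← deg_add, h1]
  have h3 : deg (g - f) = 1 := by omega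
  have h4 : g - f ≠ 0 := by intro h0; rw [h0] at h3; simp [deg] at h3
  obtain ⟨q, hq⟩ : ∃ q, (g - f) q ≠ 0 := by
    by_contra hc
    push_neg at hc
    exact h4 (Finsupp.ext fun x => hc x)
  have h5 : e' q ≤ g - f := Finsupp.single_le_iff.mpr (by omega)
  have h6 : e' q = g - f := eq_of_le_of_deg_eq h5 (by rw [h3]; exact deg_single q 1)
  exact ⟨q, by rw [h6, add_comm, h1]⟩

/-- `j ∈ set(u_i)` : some earlier generator divides `x_j · u_i`. -/
def Sset (a : Fin m → (Fin n →₀ ℕ)) (i : Fin m) (j : Fin n) : Prop :=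
  ∃ k, k < i ∧ a k ≤ a i + e' j

lemma single_apply_ne {j x : Fin n} (h : x ≠ j) : (e' j) x = 0 := by
  rw [Finsupp.single_apply, if_neg (by exact fun hh => h hh.symm)]

lemma single_apply_self (j : Fin n) : (e' j) j = 1 := by
  rw [Finsupp.single_apply, if_pos rfl]

/-- The core combinatorial lemma. -/
lemma core (a : Fin m → (Fin n →₀ ℕ)) (d : ℕ)
    (hdeg : ∀ k, deg (a k) = d)
    (hB : ∀ i k : Fin m, k < i → ∃ s, Sset a i s ∧ a i s < a k s)
    (i : Fin m) (j : Fin n)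
    (hH : ∀ k, k < i → ∀ t, Sset a k t → a k + e' t ≠ a i + e' j)
    (hSij : Sset a i j)
    (W : Fin n →₀ ℕ) (hWw : a i + e' j ≤ W) :
    ∀ i' : Fin m, i' < i → ∀ j' : Fin n, Sset a i' j' → a i' + e' j' ≤ W →
      ∃ l, (a i + e' j) l < W l ∧
        ∃ k, k < i ∧ ∃ t, Sset a k t ∧ a k + e' t ≤ (a i + e' j) + e' l := by
  set w := a i + e' j with hw
  have hdegw : deg w = d + 1 := by rw [hw, deg_add, hdeg, deg_single]
  have base : ∀ (k : Fin m) (t : Fin n), k < i → Sset a k t → a k + e' t ≤ W →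
      (∃ l, a k + e' t ≤ w + e' l) →
      ∃ l, w l < W l ∧ ∃ k', k' < i ∧ ∃ t', Sset a k' t' ∧ a k' + e' t' ≤ w + e' l := by
    intro k t hk hSt hbW ⟨l, hle⟩
    have hne : a k + e' t ≠ w := hH k hk t hSt
    have hl : w l < (a k + e' t) l := by
      by_contra hcon
      push_neg at hcon
      apply hne
      apply eq_of_le_of_deg_eq
      · intro x
        by_cases hx : x = l
        · subst hx; exact hcon
        · have h1 := hle x
          have h2 : (w + e' l) x = w x := by
            rw [Finsupp.add_apply, single_apply_ne hx, add_zero]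
          rw [h2] at h1
          exact h1
      · rw [deg_add, hdeg, deg_single, hdegw]
    exact ⟨l, lt_of_lt_of_le hl (hbW l), k, hk, t, hSt, hle⟩
  suffices H : ∀ N : ℕ, ∀ i' : Fin m, i'.val < N → i' < i → ∀ j' : Fin n,
      Sset a i' j' → a i' + e' j' ≤ W →
      ∃ l, w l < W l ∧ ∃ k, k < i ∧ ∃ t, Sset a k t ∧ a k + e' t ≤ w + e' l by
    intro i' hi' j' h1 h2
    exact H (i'.val + 1) i' (Nat.lt_succ_self _) hi' j' h1 h2
  intro N
  induction N with
  | zero => intro i' hN; omega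
  | succ N IH =>
    intro i' hN hi' j' hj' hb₀
    by_cases hI : ∃ l, a i' + e' j' ≤ w + e' l
    · exact base i' j' hi' hj' hb₀ hI
    · obtain ⟨k₂0, hk₂0i, hk₂0w⟩ := hSij
      by_cases h2a : ∃ k, k < i ∧ i' < k ∧ a k ≤ w
      · obtain ⟨k, hki, hik, hkw⟩ := h2a
        obtain ⟨r, hr⟩ := exists_single_of_le_of_deg hkw (by rw [hdegw, hdeg])
        have hrS : ¬ Sset a k r := fun h => hH k hki r h hr.symm
        obtain ⟨τ, hτS, hτ⟩ := hB k i' hik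
        have hτr : τ ≠ r := fun h => hrS (h ▸ hτS)
        have hwτ : w τ = a k τ := by
          rw [hr, Finsupp.add_apply, single_apply_ne hτr, add_zero]
        refine ⟨τ, ?_, k, hki, τ, hτS, add_le_add hkw le_rfl⟩
        calc w τ = a k τ := hwτ
          _ < a i' τ := hτ
          _ ≤ (a i' + e' j') τ := by
              rw [Finsupp.add_apply]; exact Nat.le_add_right _ _
          _ ≤ W τ := hb₀ τ
      · have hi'w : ¬ a i' ≤ w := fun h => hI ⟨j', add_le_add h le_rfl⟩
        have hk₂i' : k₂0 < i' := by
          rcases lt_trichotomy k₂0 i' with h | h | h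
          · exact h
          · exact absurd (h ▸ hk₂0w) hi'w
          · exact absurd ⟨k₂0, hk₂0i, h, hk₂0w⟩ h2a
        have hk₂le : a k₂0 ≤ w := hk₂0w
        obtain ⟨r₂, hr₂⟩ := exists_single_of_le_of_deg hk₂le (by rw [hdegw, hdeg])
        have hr₂S : ¬ Sset a k₂0 r₂ := fun h => hH k₂0 hk₂0i r₂ h hr₂.symm
        have main21 : ∀ t', Sset a i' t' → a i' + e' t' ≤ W →
            (¬ ∃ l, a i' + e' t' ≤ w + e' l) → a i' t' < w t' →
            ∃ l, w l < W l ∧ ∃ k, k < i ∧ ∃ t, Sset a k t ∧ a k + e' t ≤ w + e' l := by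
          intro t' hSt' hbW hI' _hslot
          obtain ⟨k₃, hk₃i', hk₃le⟩ := hSt'
          obtain ⟨q, hq⟩ := exists_single_of_le_of_deg hk₃le
            (by rw [deg_add, hdeg, hdeg, deg_single])
          have hk₃w : ¬ a k₃ ≤ w := fun h => hI' ⟨q, hq ▸ add_le_add h le_rfl⟩
          have hk₃k₂ : k₃ ≠ k₂0 := fun h => hk₃w (h ▸ hk₂le)
          rcases lt_or_gt_of_ne hk₃k₂ with h | h
          · obtain ⟨σ, hσS, hσ⟩ := hB k₂0 k₃ h
            have hσr₂ : σ ≠ r₂ := fun hh => hr₂S (hh ▸ hσS)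
            have hwσ : w σ = a k₂0 σ := by
              rw [hr₂, Finsupp.add_apply, single_apply_ne hσr₂, add_zero]
            refine ⟨σ, ?_, k₂0, hk₂0i, σ, hσS, add_le_add hk₂le le_rfl⟩
            calc w σ = a k₂0 σ := hwσ
              _ < a k₃ σ := hσ
              _ ≤ (a i' + e' t') σ := hk₃le σ
              _ ≤ W σ := hbW σ
          · obtain ⟨σ, hσS, hσ⟩ := hB k₃ k₂0 h
            have hb₂W : a k₃ + e' σ ≤ W := by
              intro x
              by_cases hx : x = σ
              · subst hx
                rw [Finsupp.add_apply, single_apply_self]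
                have h1 : a k₃ x + 1 ≤ a k₂0 x := hσ
                have h2 : a k₂0 x ≤ w x := hk₂le x
                exact le_trans (le_trans h1 h2) (hWw x)
              · rw [Finsupp.add_apply, single_apply_ne hx, add_zero]
                exact le_trans (hk₃le x) (hbW x)
            have hk₃N : k₃.val < N := by
              have h1 : k₃.val < i'.val := hk₃i'
              omega
            exact IH k₃ hk₃N (lt_trans hk₃i' hi') σ hσS hb₂W
        by_cases hslot : a i' j' < w j'
        · exact main21 j' hj' hb₀ hI hslot
        · push_neg at hslot
          obtain ⟨τ, hτS, hτ⟩ := hB i' k₂0 hk₂i'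
          have hτw : a i' τ < w τ := lt_of_lt_of_le hτ (hk₂le τ)
          have hb₁W : a i' + e' τ ≤ W := by
            intro x
            by_cases hx : x = τ
            · subst hx
              rw [Finsupp.add_apply, single_apply_self]
              exact le_trans (le_trans hτ (hk₂le x)) (hWw x)
            · rw [Finsupp.add_apply, single_apply_ne hx, add_zero]
              have h1 := hb₀ x
              rw [Finsupp.add_apply] at h1
              omega
          by_cases hI₁ : ∃ l, a i' + e' τ ≤ w + e' l
          · exact base i' τ hi' hτS hb₁W hI₁
          · exact main21 τ hτS hb₁W hI₁ hτw

section Algebra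

variable {K : Type*} [Field K]

lemma mem_span_monomials {S : Set (Fin n →₀ ℕ)} {c : Fin n →₀ ℕ} :
    (monomial c 1 : MvPolynomial (Fin n) K) ∈ Ideal.span ((fun s => monomial s (1:K)) '' S) ↔
      ∃ s ∈ S, s ≤ c := by
  rw [mem_ideal_span_monomial_image]
  constructor
  · intro h
    exact h c (by simp [support_monomial])
  · intro h xi hxi
    have hxc : c = xi := by simpa [support_monomial] using hxi
    subst hxc; exact h

/-- The main auxiliary theorem: the combinatorics implies linear quotients of HS₁. -/
theorem aux (hn : 0 < n) (hm : 0 < m) (d : ℕ) (a : Fin m → Fin n →₀ ℕ)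
    (hdeg : ∀ k, deg (a k) = d)
    (hB : ∀ i k, k < i → ∃ s, Sset a i s ∧ a i s < a k s) :
    HasLinearQuotients (Ideal.span
      ((fun s => monomial s (1:K)) '' {v | ∃ i j, Sset a i j ∧ v = a i + e' j})) := by
  classical
  set E : Fin m → Fin n → ℕ := fun i j => n * i.val + j.val with hE
  set VK : ℕ → (Fin n →₀ ℕ) := fun κ =>
    a ⟨κ / n % m, Nat.mod_lt _ hm⟩ + e' ⟨κ % n, Nat.mod_lt _ hn⟩ with hVK
  have hVKE : ∀ i j, VK (E i j) = a i + e' j := by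
    intro i j
    have h1 : (n * i.val + j.val) / n = i.val := by
      rw [Nat.mul_add_div hn, Nat.div_eq_of_lt j.isLt, add_zero]
    have h2 : (n * i.val + j.val) % n = j.val := by
      rw [Nat.mul_add_mod, Nat.mod_eq_of_lt j.isLt]
    show a _ + e' _ = a i + e' j
    congr 1
    · congr 1
      exact Fin.ext (by simp [hE, h1, Nat.mod_eq_of_lt i.isLt])
    · congr 1
      exact Fin.ext (by simp [hE, h2])
  set PFk : Finset ℕ :=
    (Finset.univ.filter (fun p : Fin m × Fin n => Sset a p.1 p.2)).image
      (fun p => E p.1 p.2) with hPFkdef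
  have hPFk : ∀ κ, κ ∈ PFk ↔ ∃ i j, Sset a i j ∧ κ = E i j := by
    intro κ
    simp only [hPFkdef, Finset.mem_image, Finset.mem_filter, Finset.mem_univ, true_and]
    constructor
    · rintro ⟨⟨i, j⟩, hS, rfl⟩; exact ⟨i, j, hS, rfl⟩
    · rintro ⟨i, j, hS, rfl⟩; exact ⟨⟨i, j⟩, hS, rfl⟩
  set KEYS : Finset ℕ := PFk.filter (fun κ => ∀ κ' ∈ PFk, VK κ' = VK κ → κ ≤ κ') with hKEYSdef
  have hKEYSsub : KEYS ⊆ PFk := Finset.filter_subset _ _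
  have hmink : ∀ κ ∈ KEYS, ∀ κ' ∈ PFk, VK κ' = VK κ → κ ≤ κ' := by
    intro κ hκ; exact (Finset.mem_filter.mp hκ).2
  have hminkey : ∀ (i : Fin m) (j : Fin n), Sset a i j →
      ∃ κ ∈ KEYS, VK κ = a i + e' j ∧ κ ≤ E i j := by
    intro i j hS
    have hEmem : E i j ∈ PFk := (hPFk _).mpr ⟨i, j, hS, rfl⟩
    have hEC : E i j ∈ PFk.filter (fun κ => VK κ = a i + e' j) :=
      Finset.mem_filter.mpr ⟨hEmem, hVKE i j⟩
    have hCne : (PFk.filter (fun κ => VK κ = a i + e' j)).Nonempty := ⟨E i j, hEC⟩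
    set κ := (PFk.filter (fun κ => VK κ = a i + e' j)).min' hCne with hκdef
    have hκmem := Finset.min'_mem _ hCne
    rw [Finset.mem_filter] at hκmem
    refine ⟨κ, ?_, hκmem.2, Finset.min'_le _ _ hEC⟩
    refine Finset.mem_filter.mpr ⟨hκmem.1, ?_⟩
    intro κ' hκ' hVeq
    exact Finset.min'_le _ _ (Finset.mem_filter.mpr ⟨hκ', by rw [hVeq, hκmem.2]⟩)
  have hdec : ∀ κ ∈ PFk, ∃ i j, Sset a i j ∧ κ = E i j ∧ VK κ = a i + e' j := by
    intro κ hκ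
    obtain ⟨i, j, hS, rfl⟩ := (hPFk κ).mp hκ
    exact ⟨i, j, hS, rfl, hVKE i j⟩
  have hdegVK : ∀ κ ∈ PFk, deg (VK κ) = d + 1 := by
    intro κ hκ
    obtain ⟨i, j, _, _, hV⟩ := hdec κ hκ
    rw [hV, deg_add, hdeg, deg_single]
  have hElt : ∀ (k : Fin m) (t₀ : Fin n) (i₀ : Fin m) (j₀ : Fin n), k < i₀ →
      E k t₀ < E i₀ j₀ := by
    intro k t₀ i₀ j₀ hk
    have h1 : t₀.val < n := t₀.isLt
    have h2 : k.val + 1 ≤ i₀.val := hk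
    calc n * k.val + t₀.val < n * k.val + n := by omega
      _ = n * (k.val + 1) := by ring
      _ ≤ n * i₀.val := Nat.mul_le_mul_left n h2
      _ ≤ n * i₀.val + j₀.val := Nat.le_add_right _ _
  set σiso := KEYS.orderIsoOfFin rfl with hσiso
  refine ⟨KEYS.card, fun t => monomial (VK (σiso t)) 1, fun t => ⟨_, rfl⟩, ?_, ?_, ?_⟩
  · -- pairwise non-dividing
    intro t t' htt' hdvd
    rw [monomial_dvd_monomial] at hdvd
    have hle : VK (σiso t) ≤ VK (σiso t') := by
      rcases hdvd.1 with h | h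
      · exact absurd h one_ne_zero
      · exact h
    have heq : VK (σiso t) = VK (σiso t') := by
      apply eq_of_le_of_deg_eq hle
      rw [hdegVK _ (hKEYSsub (σiso t).2), hdegVK _ (hKEYSsub (σiso t').2)]
    have h1 : (σiso t : ℕ) ≤ (σiso t' : ℕ) :=
      hmink _ (σiso t).2 _ (hKEYSsub (σiso t').2) heq.symm
    have h2 : (σiso t' : ℕ) ≤ (σiso t : ℕ) :=
      hmink _ (σiso t').2 _ (hKEYSsub (σiso t).2) heq
    exact htt' (σiso.injective (Subtype.ext (le_antisymm h1 h2)))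
  · -- span equality
    apply le_antisymm
    · rw [Ideal.span_le]
      rintro _ ⟨t, rfl⟩
      obtain ⟨i, j, hS, _, hV⟩ := hdec _ (hKEYSsub (σiso t).2)
      exact Ideal.subset_span ⟨VK (σiso t), ⟨i, j, hS, hV⟩, rfl⟩
    · rw [Ideal.span_le]
      rintro _ ⟨v, ⟨i, j, hS, rfl⟩, rfl⟩
      obtain ⟨κ, hκK, hκV, _⟩ := hminkey i j hS
      have hx : (fun s => monomial s (1:K)) (a i + e' j)
          = monomial (VK (σiso (σiso.symm ⟨κ, hκK⟩))) 1 := by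
        simp only [OrderIso.apply_symm_apply, hκV]
      rw [hx]
      exact Ideal.subset_span ⟨σiso.symm ⟨κ, hκK⟩, rfl⟩
  · -- colon ideals are generated by variables
    intro t
    obtain ⟨i₀, j₀, hS₀, hE₀, hV₀⟩ := hdec _ (hKEYSsub (σiso t).2)
    set w := a i₀ + e' j₀ with hwdef
    have hH : ∀ k, k < i₀ → ∀ t₀, Sset a k t₀ → a k + e' t₀ ≠ w := by
      intro k hk t₀ hSt₀ heq
      have hmem : E k t₀ ∈ PFk := (hPFk _).mpr ⟨k, t₀, hSt₀, rfl⟩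
      have hVeq : VK (E k t₀) = VK (σiso t) := by rw [hVKE, heq, ← hV₀]
      have hge : (σiso t : ℕ) ≤ E k t₀ := hmink _ (σiso t).2 _ hmem hVeq
      have hlt : E k t₀ < E i₀ j₀ := hElt k t₀ i₀ j₀ hk
      rw [← hE₀] at hlt
      omega
    have himg : (fun t' => monomial (VK (σiso t')) (1:K)) '' {t' | t' < t}
        = (fun s => monomial s (1:K)) ''
          (VK '' {κ' : ℕ | κ' ∈ KEYS ∧ κ' < (σiso t : ℕ)}) := by
      ext x
      constructor
      · rintro ⟨t', ht', rfl⟩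
        refine ⟨VK (σiso t'), ⟨(σiso t' : ℕ), ⟨(σiso t').2, ?_⟩, rfl⟩, rfl⟩
        exact Subtype.coe_lt_coe.mpr (σiso.lt_iff_lt.mpr ht')
      · rintro ⟨v, ⟨κ', ⟨hκ'K, hκ'lt⟩, rfl⟩, rfl⟩
        refine ⟨σiso.symm ⟨κ', hκ'K⟩, ?_, by simp only [OrderIso.apply_symm_apply]⟩
        have hlt : σiso (σiso.symm ⟨κ', hκ'K⟩) < σiso t := by
          simp only [OrderIso.apply_symm_apply]
          exact Subtype.mk_lt_mk.mpr hκ'lt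
        exact σiso.lt_iff_lt.mp hlt
    refine ⟨{l | X l ∈ (Ideal.span ((fun t' => monomial (VK (σiso t')) (1:K)) ''
        {t' | t' < t})).colon (Ideal.span {monomial (VK (σiso t)) (1:K)})}, ?_⟩
    apply le_antisymm
    · -- colon ⊆ span of variables
      intro p hp
      rw [Ideal.mem_colon_span_singleton, himg] at hp
      rw [mem_ideal_span_X_image]
      intro c hc
      have hcoeff : coeff (c + VK (σiso t)) (p * monomial (VK (σiso t)) (1:K)) = coeff c p := by
        rw [coeff_mul_monomial', if_pos le_add_self, add_tsub_cancel_right, mul_one]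
      have hmem : (c + VK (σiso t)) ∈ (p * monomial (VK (σiso t)) (1:K)).support := by
        rw [mem_support_iff, hcoeff]
        exact mem_support_iff.mp hc
      obtain ⟨v, hv, hvle⟩ := mem_ideal_span_monomial_image.mp hp _ hmem
      obtain ⟨κ', ⟨hκ'K, hκ'lt⟩, rfl⟩ := hv
      obtain ⟨i₁, j₁, hS₁, hE₁, hV₁⟩ := hdec κ' (hKEYSsub hκ'K)
      have hWw : w ≤ c + VK (σiso t) := by rw [hV₀]; exact le_add_self
      have hvle' : a i₁ + e' j₁ ≤ c + VK (σiso t) := by rw [← hV₁]; exact hvle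
      have hlex : i₁ < i₀ ∨ (i₁ = i₀ ∧ j₁ < j₀) := by
        have h1 : n * i₁.val + j₁.val < n * i₀.val + j₀.val := by
          have h0 := hκ'lt
          rw [hE₁, hE₀] at h0
          exact h0
        rcases lt_trichotomy i₁.val i₀.val with h | h | h
        · exact Or.inl h
        · have hj : j₁.val < j₀.val := by rw [h] at h1; omega
          exact Or.inr ⟨Fin.ext h, hj⟩
        · exfalso
          have h2 : i₀.val + 1 ≤ i₁.val := h
          have h3 : n * (i₀.val + 1) ≤ n * i₁.val := Nat.mul_le_mul_left n h2
          have h4 := j₀.isLt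
          have h5 := j₁.isLt
          nlinarith [h1, h3]
      have key : ∃ l, w l < (c + VK (σiso t)) l ∧
          ∃ κ'' ∈ KEYS, (κ'' : ℕ) < (σiso t : ℕ) ∧ VK κ'' ≤ w + e' l := by
        rcases hlex with hlt | ⟨heq, hjlt⟩
        · obtain ⟨l, hl1, k, hki, t₀, hSt₀, hble⟩ :=
            core a d hdeg hB i₀ j₀ hH hS₀ (c + VK (σiso t)) hWw i₁ hlt j₁ hS₁ hvle'
          obtain ⟨κ'', hκ''K, hκ''V, hκ''le⟩ := hminkey k t₀ hSt₀
          refine ⟨l, hl1, κ'', hκ''K, ?_, by rw [hκ''V]; exact hble⟩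
          have h1 : E k t₀ < E i₀ j₀ := hElt k t₀ i₀ j₀ hki
          rw [← hE₀] at h1
          omega
        · subst heq
          have hj₁j₀ : j₁ ≠ j₀ := Fin.ne_of_lt hjlt
          refine ⟨j₁, ?_, κ', hκ'K, hκ'lt, ?_⟩
          · have h1 := hvle' j₁
            rw [Finsupp.add_apply, single_apply_self] at h1
            have h2 : w j₁ = a i₁ j₁ := by
              rw [hwdef, Finsupp.add_apply, single_apply_ne hj₁j₀, add_zero]
            omega
          · rw [hV₁]
            intro x
            rw [hwdef]
            rw [Finsupp.add_apply, Finsupp.add_apply, Finsupp.add_apply]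
            have := Nat.le_add_left ((e' j₁) x) ((e' j₀) x)
            omega
      obtain ⟨l, hl1, κ'', hκ''K, hκ''lt, hκ''le⟩ := key
      refine ⟨l, ?_, ?_⟩
      · simp only [Set.mem_setOf_eq]
        rw [Ideal.mem_colon_span_singleton, himg]
        have hXmul : (X l : MvPolynomial (Fin n) K) * monomial (VK (σiso t)) 1
            = monomial (e' l + VK (σiso t)) 1 := by
          rw [show (X l : MvPolynomial (Fin n) K) = monomial (e' l) 1 from rfl,
            monomial_mul, one_mul]
        rw [hXmul, mem_span_monomials]
        refine ⟨VK κ'', ⟨κ'', ⟨hκ''K, hκ''lt⟩, rfl⟩, ?_⟩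
        rw [hV₀]
        rw [add_comm]
        exact hκ''le
      · have h2 : (c + VK (σiso t)) l = c l + w l := by
          rw [Finsupp.add_apply, hV₀]
        omega
    · -- span of variables ⊆ colon
      rw [Ideal.span_le]
      rintro _ ⟨l, hl, rfl⟩
      exact hl

end Algebra

end HSaux
namespace HSaux

section Final

variable {K : Type*} [Field K] {n m : ℕ}

lemma span_empty_hlq :
    HasLinearQuotients (Ideal.span (∅ : Set (MvPolynomial (Fin n) K))) := by
  refine ⟨0, Fin.elim0, fun i => i.elim0, fun i => i.elim0, ?_, fun i => i.elim0⟩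
  rw [Set.range_eq_empty]

end Final

end HSaux

/-- **Theorem 1.3 (Ficarra–Herzog).**  Let `I` be a monomial ideal generated in a single
degree `d` with linear quotients, and fix an admissible order `u 0, …, u (m-1)` of its
minimal monomial generators.  Then the first homological shift ideal
`HS_1(I) = (u_i · x_j : j ∈ set(u_i))` has linear quotients. -/
theorem HS_one_hasLinearQuotients
    {K : Type*} [Field K] {n m : ℕ} (d : ℕ)
    (u : Fin m → MvPolynomial (Fin n) K)
    (hmon : ∀ i, IsMonomialElt (u i))
    (hdeg : ∀ i, (u i).totalDegree = d)
    (hmin : ∀ i j, i ≠ j → ¬ u i ∣ u j)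
    (hadm : ∀ i : Fin m,
      genByVars ((Ideal.span (u '' {j | j < i})).colon (Ideal.span {u i}))) :
    HasLinearQuotients (Ideal.span
      {w : MvPolynomial (Fin n) K | ∃ (i : Fin m) (j : Fin n),
        MvPolynomial.X j ∈ (Ideal.span (u '' {j' | j' < i})).colon (Ideal.span {u i}) ∧
        w = u i * MvPolynomial.X j}) := by
  classical
  choose a ha using hmon
  have hdeg' : ∀ i, HSaux.deg (a i) = d := by
    intro i
    have h := hdeg i
    rw [ha i, totalDegree_monomial _ (one_ne_zero (α := K))] at h
    exact h
  -- rewrite the span of earlier generators as a span of monomials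
  have himg : ∀ i : Fin m, u '' {j' | j' < i}
      = (fun s => monomial s (1:K)) '' (a '' {j' | j' < i}) := by
    intro i
    ext x
    constructor
    · rintro ⟨k, hk, rfl⟩
      exact ⟨a k, ⟨k, hk, rfl⟩, (ha k).symm⟩
    · rintro ⟨v, ⟨k, hk, rfl⟩, rfl⟩
      exact ⟨k, hk, (ha k)⟩
  -- characterize membership of a variable in the colon ideal
  have hXmem : ∀ (i : Fin m) (j : Fin n),
      (X j ∈ (Ideal.span (u '' {j' | j' < i})).colon (Ideal.span {u i}))
        ↔ HSaux.Sset a i j := by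
    intro i j
    rw [Ideal.mem_colon_span_singleton, himg i, ha i]
    have hmul : (X j : MvPolynomial (Fin n) K) * monomial (a i) 1
        = monomial (HSaux.e' j + a i) 1 := by
      rw [show (X j : MvPolynomial (Fin n) K) = monomial (HSaux.e' j) 1 from rfl,
        monomial_mul, one_mul]
    rw [hmul, HSaux.mem_span_monomials]
    constructor
    · rintro ⟨s, ⟨k, hk, rfl⟩, hle⟩
      exact ⟨k, hk, by rwa [add_comm] at hle⟩
    · rintro ⟨k, hk, hle⟩
      exact ⟨a k, ⟨k, hk, rfl⟩, by rwa [add_comm]⟩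
  -- the admissibility ⇒ property (B)
  have hB : ∀ i k : Fin m, k < i → ∃ s, HSaux.Sset a i s ∧ a i s < a k s := by
    intro i k hk
    obtain ⟨T, hT⟩ := hadm i
    have hq : monomial (a k - a i) (1:K)
        ∈ (Ideal.span (u '' {j' | j' < i})).colon (Ideal.span {u i}) := by
      rw [Ideal.mem_colon_span_singleton, himg i, ha i, monomial_mul, one_mul,
        HSaux.mem_span_monomials]
      refine ⟨a k, ⟨k, hk, rfl⟩, ?_⟩
      intro x
      rw [Finsupp.add_apply, Finsupp.tsub_apply]
      omega
    rw [hT, mem_ideal_span_X_image] at hq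
    obtain ⟨s, hsT, hs⟩ := hq (a k - a i) (by simp [support_monomial])
    refine ⟨s, ?_, ?_⟩
    · rw [← hXmem i s, hT]
      exact Ideal.subset_span ⟨s, hsT, rfl⟩
    · rw [Finsupp.tsub_apply] at hs
      omega
  -- rewrite the generating set
  have hG : {w : MvPolynomial (Fin n) K | ∃ (i : Fin m) (j : Fin n),
        MvPolynomial.X j ∈ (Ideal.span (u '' {j' | j' < i})).colon (Ideal.span {u i}) ∧
        w = u i * MvPolynomial.X j}
      = (fun s => monomial s (1:K)) ''
          {v | ∃ i j, HSaux.Sset a i j ∧ v = a i + HSaux.e' j} := by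
    ext x
    simp only [Set.mem_setOf_eq, Set.mem_image]
    constructor
    · rintro ⟨i, j, hXj, rfl⟩
      refine ⟨a i + HSaux.e' j, ⟨i, j, (hXmem i j).mp hXj, rfl⟩, ?_⟩
      rw [ha i, show (X j : MvPolynomial (Fin n) K) = monomial (HSaux.e' j) 1 from rfl,
        monomial_mul, one_mul]
    · rintro ⟨v, ⟨i, j, hS, rfl⟩, rfl⟩
      refine ⟨i, j, (hXmem i j).mpr hS, ?_⟩
      rw [ha i, show (X j : MvPolynomial (Fin n) K) = monomial (HSaux.e' j) 1 from rfl,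
        monomial_mul, one_mul]
  rw [hG]
  rcases Nat.eq_zero_or_pos n with hn | hn
  · have hempty : {v : Fin n →₀ ℕ | ∃ i j, HSaux.Sset a i j ∧ v = a i + HSaux.e' j} = ∅ := by
      ext v
      simp only [Set.mem_setOf_eq, Set.mem_empty_iff_false, iff_false]
      rintro ⟨i, j, _, _⟩
      exact absurd j.isLt (by omega)
    rw [hempty, Set.image_empty]
    exact HSaux.span_empty_hlq
  rcases Nat.eq_zero_or_pos m with hm | hm
  · have hempty : {v : Fin n →₀ ℕ | ∃ i j, HSaux.Sset a i j ∧ v = a i + HSaux.e' j} = ∅ := by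
      ext v
      simp only [Set.mem_setOf_eq, Set.mem_empty_iff_false, iff_false]
      rintro ⟨i, _, _, _⟩
      exact absurd i.isLt (by omega)
    rw [hempty, Set.image_empty]
    exact HSaux.span_empty_hlq
  exact HSaux.aux hn hm d a hdeg' hB
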